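/- Let P_0,...,P_k be a W-consistent partition of the nodes of the union automaton U and let v ≠ v' be two nodes in the same block P_h having the same incoming label. If there exist edges (u,v) and (u',v') with u ∈ P_i, u' ∈ P_j and i < j, then in every Wheeler C-order of U it must hold that v < v'. -/
import Mathlib


section

variable {V A : Type}

/-- `r` is a strict total order. -/
def StrictTotal (r : V → V → Prop) : Prop :=
  (∀ x, ¬ r x x) ∧ (∀ x y z, r x y → r y z → r x z) ∧
  (∀ x y, x ≠ y → r x y ∨ r y x)

/-- `r` is a Wheeler order for the labeled graph `E`. -/
def IsWheelerOrder [LinearOrder A] (E : V → V → A → Prop) (r : V → V → Prop) : Prop :=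
  StrictTotal r ∧
  (∀ v w, (∀ u a, ¬ E u v a) → (∃ u a, E u w a) → r v w) ∧
  (∀ u v a u' v' a', E u v a → E u' v' a' →
    (a < a' → r v v') ∧ (a = a' → r u u' → r v v' ∨ v = v'))

/-- `r` preserves the order of the node sequence `f 0, …, f (n-1)`. -/
def CompatSeq (f : ℕ → V) (n : ℕ) (r : V → V → Prop) : Prop :=
  ∀ i j, i < j → j < n → r (f i) (f j)

/-- A Wheeler C-order of the union automaton: a Wheeler order compatible with
the original orders of the nodes of the two input automata. -/
def IsWheelerCOrder [LinearOrder A] (E : V → V → A → Prop)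
    (f0 : ℕ → V) (n0 : ℕ) (f1 : ℕ → V) (n1 : ℕ) (r : V → V → Prop) : Prop :=
  IsWheelerOrder E r ∧ CompatSeq f0 n0 r ∧ CompatSeq f1 n1 r

/-- The ordered partition `P 0, …, P k` is W-consistent: block indices are
respected by every Wheeler C-order. -/
def WConsistent [LinearOrder A] (E : V → V → A → Prop)
    (f0 : ℕ → V) (n0 : ℕ) (f1 : ℕ → V) (n1 : ℕ)
    (P : ℕ → Set V) (k : ℕ) : Prop :=
  ∀ r, IsWheelerCOrder E f0 n0 f1 n1 r →
    ∀ i j x y, i < j → j ≤ k → x ∈ P i → y ∈ P j → r x y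

/-- Lemma 6 of the paper: if `v ≠ v'` lie in the same block of a W-consistent
partition, have the same incoming label, and there are edges `(u,v)`, `(u',v')`
with `u ∈ P i`, `u' ∈ P j`, `i < j`, then `v < v'` in every Wheeler C-order. -/
theorem stmt_7 [LinearOrder A] (E : V → V → A → Prop)
    (f0 : ℕ → V) (n0 : ℕ) (f1 : ℕ → V) (n1 : ℕ)
    (P : ℕ → Set V) (k : ℕ)
    (hW : WConsistent E f0 n0 f1 n1 P k)
    (h : ℕ) (hhk : h ≤ k) (v v' : V) (hne : v ≠ v')
    (hv : v ∈ P h) (hv' : v' ∈ P h)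
    (a : A)
    (hlabv : ∀ u b, E u v b → b = a) (hlabv' : ∀ u b, E u v' b → b = a)
    (u u' : V) (i j : ℕ) (hij : i < j) (hjk : j ≤ k)
    (hui : u ∈ P i) (huj : u' ∈ P j)
    (he : E u v a) (he' : E u' v' a) :
    ∀ r, IsWheelerCOrder E f0 n0 f1 n1 r → r v v' := by
  intro r hr
  have huu' : r u u' := hW r hr i j u u' hij hjk hui huj
  have := (hr.1.2.2 u v a u' v' a he he').2 rfl huu'
  tauto

end
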